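/- arXiv:2112.01632 — 2 statements merged into one kernel-verified Lean document; each statement's English description precedes it below -/
import Mathlib

section
/- Let f : ℝ² → ℝ be continuous and compactly supported in the half-plane z < 1, and set f₁(x,z) = f(x, 2−z). For r > 1 define the Radon transform on double circle arcs R_D f(x₀, r) = ∫₁^r (1/√(1−(z/r)²)) [ Σ_{j=1}^{2} f₁(√(r²−1) + (−1)^j r √(1−(z/r)²) + x₀, z) + f₁(−√(r²−1) + (−1)^j r √(1−(z/r)²) + x₀, z) ] dz. Then the one-dimensional Fourier transform of R_D f with respect to x₀ satisfies: for all ξ ∈ ℝ and r > 1, \hat{R_D f}(ξ, r) = 4 ∫_{1/r}^{1} (r/√(1−s²)) \hat{f₁}(ξ, r s) cos(ξ √(r²−1)) cos(ξ r √(1−s²)) ds, where \hat{f₁}(ξ, z) = ∫_ℝ f₁(x, z) e^{−i x ξ} dx. -/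
open MeasureTheory Real

lemma ft_translate (φ : ℝ → ℝ) (ξ a : ℝ) :
    (∫ x₀ : ℝ, (φ (a + x₀) : ℂ) * Complex.exp (-Complex.I * x₀ * ξ))
      = Complex.exp (Complex.I * a * ξ) * ∫ x : ℝ, (φ x : ℂ) * Complex.exp (-Complex.I * x * ξ) := by
  calc (∫ x₀ : ℝ, (φ (a + x₀) : ℂ) * Complex.exp (-Complex.I * x₀ * ξ))
      = ∫ x₀ : ℝ, Complex.exp (Complex.I * a * ξ) *
          ((fun x : ℝ => (φ x : ℂ) * Complex.exp (-Complex.I * x * ξ)) (a + x₀)) := by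
        congr 1; funext x₀
        have h : Complex.exp (Complex.I * a * ξ) * Complex.exp (-Complex.I * ((a : ℝ) + x₀ : ℝ) * ξ)
            = Complex.exp (-Complex.I * x₀ * ξ) := by
          rw [← Complex.exp_add]; congr 1; push_cast; ring
        simp only []
        rw [← h]; ring
    _ = Complex.exp (Complex.I * a * ξ) *
          ∫ x₀ : ℝ, (fun x : ℝ => (φ x : ℂ) * Complex.exp (-Complex.I * x * ξ)) (a + x₀) :=
        integral_const_mul _ _
    _ = _ := by beta_reduce; rw [integral_add_left_eq_self (fun x : ℝ => (φ x : ℂ) * Complex.exp (-Complex.I * x * ξ)) a]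


lemma four_exp (A b ξ : ℝ) :
    Complex.exp (Complex.I * ((A - b : ℝ) : ℂ) * ξ) + Complex.exp (Complex.I * ((A + b : ℝ) : ℂ) * ξ)
      + Complex.exp (Complex.I * ((-A - b : ℝ) : ℂ) * ξ) + Complex.exp (Complex.I * ((-A + b : ℝ) : ℂ) * ξ)
      = 4 * ((Real.cos (ξ * A) : ℝ) : ℂ) * ((Real.cos (ξ * b) : ℝ) : ℂ) := by
  have h2 : ∀ t : ℝ, Complex.exp (Complex.I * t) + Complex.exp (-(Complex.I * t))
      = 2 * ((Real.cos t : ℝ) : ℂ) := by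
    intro t
    rw [Complex.ofReal_cos, Complex.two_cos, mul_comm (t : ℂ) Complex.I, neg_mul,
      mul_comm (t : ℂ) Complex.I]
  have e1 : Complex.exp (Complex.I * ((A - b : ℝ) : ℂ) * ξ)
      = Complex.exp (Complex.I * (ξ * A)) * Complex.exp (-(Complex.I * (ξ * b))) := by
    rw [← Complex.exp_add]; congr 1; push_cast; ring
  have e2 : Complex.exp (Complex.I * ((A + b : ℝ) : ℂ) * ξ)
      = Complex.exp (Complex.I * (ξ * A)) * Complex.exp (Complex.I * (ξ * b)) := by
    rw [← Complex.exp_add]; congr 1; push_cast; ring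
  have e3 : Complex.exp (Complex.I * ((-A - b : ℝ) : ℂ) * ξ)
      = Complex.exp (-(Complex.I * (ξ * A))) * Complex.exp (-(Complex.I * (ξ * b))) := by
    rw [← Complex.exp_add]; congr 1; push_cast; ring
  have e4 : Complex.exp (Complex.I * ((-A + b : ℝ) : ℂ) * ξ)
      = Complex.exp (-(Complex.I * (ξ * A))) * Complex.exp (Complex.I * (ξ * b)) := by
    rw [← Complex.exp_add]; congr 1; push_cast; ring
  rw [e1, e2, e3, e4,
    show (4 : ℂ) * ((Real.cos (ξ * A) : ℝ) : ℂ) * ((Real.cos (ξ * b) : ℝ) : ℂ)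
        = (2 * ((Real.cos (ξ * A) : ℝ) : ℂ)) * (2 * ((Real.cos (ξ * b) : ℝ) : ℂ)) from by ring,
    ← h2, ← h2]
  push_cast
  ring


lemma inner_key (φ : ℝ → ℝ → ℝ) (hφ : Continuous fun p : ℝ × ℝ => φ p.1 p.2)
    (M : ℝ) (hM : ∀ x z : ℝ, φ x z ≠ 0 → |x| ≤ M ∧ 1 < z)
    (ξ r A z : ℝ) :
    (∫ x₀ : ℝ, ((1 / Real.sqrt (1 - (z / r) ^ 2) *
          ((φ (A - r * Real.sqrt (1 - (z / r) ^ 2) + x₀) z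
            + φ (A + r * Real.sqrt (1 - (z / r) ^ 2) + x₀) z)
          + (φ (-A - r * Real.sqrt (1 - (z / r) ^ 2) + x₀) z
            + φ (-A + r * Real.sqrt (1 - (z / r) ^ 2) + x₀) z)) : ℝ) : ℂ)
        * Complex.exp (-Complex.I * x₀ * ξ))
      = ((1 / Real.sqrt (1 - (z / r) ^ 2) : ℝ) : ℂ)
          * (∫ x : ℝ, (φ x z : ℂ) * Complex.exp (-Complex.I * x * ξ))
          * (4 * ((Real.cos (ξ * A) : ℝ) : ℂ)
             * ((Real.cos (ξ * (r * Real.sqrt (1 - (z / r) ^ 2))) : ℝ) : ℂ)) := by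
  have hφc : Continuous fun x => φ x z := hφ.comp (continuous_id.prodMk continuous_const)
  have hcs : HasCompactSupport fun x => φ x z := by
    apply HasCompactSupport.intro (isCompact_Icc (a := -M) (b := M))
    intro x hx
    by_contra h
    exact hx (Set.mem_Icc.mpr (abs_le.mp (hM x z h).1))
  have hint : ∀ a : ℝ, Integrable
      (fun x₀ : ℝ => (φ (a + x₀) z : ℂ) * Complex.exp (-Complex.I * x₀ * ξ)) := by
    intro a
    have hcont : Continuous fun x₀ : ℝ => (φ (a + x₀) z : ℂ)
        * Complex.exp (-Complex.I * x₀ * ξ) := by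
      apply Continuous.mul
      · exact Complex.continuous_ofReal.comp (hφc.comp (continuous_const.add continuous_id))
      · exact Complex.continuous_exp.comp
          ((continuous_const.mul Complex.continuous_ofReal).mul continuous_const)
    have hsupp' : HasCompactSupport fun x₀ : ℝ => (φ (a + x₀) z : ℂ)
        * Complex.exp (-Complex.I * x₀ * ξ) :=
      ((hcs.comp_homeomorph (Homeomorph.addLeft a)).comp_left
        (g := Complex.ofReal) rfl).mul_right
    exact hcont.integrable_of_hasCompactSupport hsupp'
  set b := r * Real.sqrt (1 - (z / r) ^ 2) with hb
  calc (∫ x₀ : ℝ, ((1 / Real.sqrt (1 - (z / r) ^ 2) *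
          ((φ (A - b + x₀) z + φ (A + b + x₀) z)
          + (φ (-A - b + x₀) z + φ (-A + b + x₀) z)) : ℝ) : ℂ)
        * Complex.exp (-Complex.I * x₀ * ξ))
      = ∫ x₀ : ℝ, ((1 / Real.sqrt (1 - (z / r) ^ 2) : ℝ) : ℂ) *
          ((φ (A - b + x₀) z : ℂ) * Complex.exp (-Complex.I * x₀ * ξ)
           + (φ (A + b + x₀) z : ℂ) * Complex.exp (-Complex.I * x₀ * ξ)
           + (φ (-A - b + x₀) z : ℂ) * Complex.exp (-Complex.I * x₀ * ξ)
           + (φ (-A + b + x₀) z : ℂ) * Complex.exp (-Complex.I * x₀ * ξ)) := by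
        congr 1; funext x₀; push_cast; ring
    _ = ((1 / Real.sqrt (1 - (z / r) ^ 2) : ℝ) : ℂ) *
          ∫ x₀ : ℝ, ((φ (A - b + x₀) z : ℂ) * Complex.exp (-Complex.I * x₀ * ξ)
           + (φ (A + b + x₀) z : ℂ) * Complex.exp (-Complex.I * x₀ * ξ)
           + (φ (-A - b + x₀) z : ℂ) * Complex.exp (-Complex.I * x₀ * ξ)
           + (φ (-A + b + x₀) z : ℂ) * Complex.exp (-Complex.I * x₀ * ξ)) :=
        integral_const_mul _ _
    _ = ((1 / Real.sqrt (1 - (z / r) ^ 2) : ℝ) : ℂ) *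
         ((∫ x₀ : ℝ, (φ (A - b + x₀) z : ℂ) * Complex.exp (-Complex.I * x₀ * ξ))
          + (∫ x₀ : ℝ, (φ (A + b + x₀) z : ℂ) * Complex.exp (-Complex.I * x₀ * ξ))
          + (∫ x₀ : ℝ, (φ (-A - b + x₀) z : ℂ) * Complex.exp (-Complex.I * x₀ * ξ))
          + (∫ x₀ : ℝ, (φ (-A + b + x₀) z : ℂ) * Complex.exp (-Complex.I * x₀ * ξ))) := by
        have i1 := hint (A - b)
        have i2 := hint (A + b)
        have i3 := hint (-A - b)
        have i4 := hint (-A + b)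
        have i12 : Integrable (fun x₀ : ℝ => (φ (A - b + x₀) z : ℂ) * Complex.exp (-Complex.I * x₀ * ξ)
            + (φ (A + b + x₀) z : ℂ) * Complex.exp (-Complex.I * x₀ * ξ)) volume := i1.add i2
        have i123 : Integrable (fun x₀ : ℝ => ((φ (A - b + x₀) z : ℂ) * Complex.exp (-Complex.I * x₀ * ξ)
            + (φ (A + b + x₀) z : ℂ) * Complex.exp (-Complex.I * x₀ * ξ))
            + (φ (-A - b + x₀) z : ℂ) * Complex.exp (-Complex.I * x₀ * ξ)) volume := i12.add i3
        rw [integral_add i123 i4, integral_add i12 i3, integral_add i1 i2]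
    _ = ((1 / Real.sqrt (1 - (z / r) ^ 2) : ℝ) : ℂ) *
         ((Complex.exp (Complex.I * ((A - b : ℝ) : ℂ) * ξ)
           + Complex.exp (Complex.I * ((A + b : ℝ) : ℂ) * ξ)
           + Complex.exp (Complex.I * ((-A - b : ℝ) : ℂ) * ξ)
           + Complex.exp (Complex.I * ((-A + b : ℝ) : ℂ) * ξ))
          * ∫ x : ℝ, (φ x z : ℂ) * Complex.exp (-Complex.I * x * ξ)) := by
        rw [ft_translate (fun x => φ x z) ξ (A - b), ft_translate (fun x => φ x z) ξ (A + b),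
          ft_translate (fun x => φ x z) ξ (-A - b), ft_translate (fun x => φ x z) ξ (-A + b)]
        ring
    _ = _ := by rw [four_exp]; ring

lemma norm_exp_unit (x ξ : ℝ) : ‖Complex.exp (-Complex.I * x * ξ)‖ = 1 := by
  have h : -Complex.I * x * ξ = ((-(x * ξ) : ℝ) : ℂ) * Complex.I := by push_cast; ring
  rw [h, Complex.norm_exp_ofReal_mul_I]

lemma sqrt_inv_bound {r z : ℝ} (hr : 1 < r) (h1 : 1 < z) (h2 : z ≤ r) :
    1 / Real.sqrt (1 - (z / r) ^ 2) ≤ r / Real.sqrt (r + 1) * (r - z) ^ (-(1/2) : ℝ) := by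
  have hr0 : (0:ℝ) < r := by linarith
  rcases eq_or_lt_of_le h2 with hzr | hzr
  · subst hzr
    rw [div_self hr0.ne', one_pow, sub_self, Real.sqrt_zero, div_zero, sub_self,
      Real.zero_rpow (by norm_num), mul_zero]
  · have hrz : (0:ℝ) < r - z := by linarith
    have e0 : 1 - (z / r) ^ 2 = (r - z) * (r + z) / r ^ 2 := by field_simp; ring
    have e1 : Real.sqrt (1 - (z / r) ^ 2) = Real.sqrt (r - z) * Real.sqrt (r + z) / r := by
      rw [e0, Real.sqrt_div (by positivity), Real.sqrt_mul hrz.le, Real.sqrt_sq hr0.le]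
    have e2 : (r - z) ^ (-(1/2) : ℝ) = (Real.sqrt (r - z))⁻¹ := by
      rw [Real.rpow_neg hrz.le, ← Real.sqrt_eq_rpow]
    rw [e1, e2, one_div_div, div_eq_mul_inv r (Real.sqrt (r+1)), mul_assoc, ← mul_inv,
      ← div_eq_mul_inv, mul_comm (Real.sqrt (r+1))]
    have h3 : (0:ℝ) < Real.sqrt (r - z) * Real.sqrt (r + 1) := by positivity
    apply div_le_div_of_nonneg_left hr0.le h3
    have : Real.sqrt (r + 1) ≤ Real.sqrt (r + z) := Real.sqrt_le_sqrt (by linarith)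
    nlinarith [Real.sqrt_nonneg (r - z), Real.sqrt_nonneg (r + 1)]

lemma integrable_aux (φ : ℝ → ℝ → ℝ) (hφ : Continuous fun p : ℝ × ℝ => φ p.1 p.2)
    (M C : ℝ) (hM : ∀ x z : ℝ, φ x z ≠ 0 → |x| ≤ M ∧ 1 < z)
    (hC : ∀ x z : ℝ, |φ x z| ≤ C)
    (ξ r A : ℝ) (hr : 1 < r) :
    Integrable (fun p : ℝ × ℝ =>
      ((1 / Real.sqrt (1 - (p.2 / r) ^ 2) *
          ((φ (A - r * Real.sqrt (1 - (p.2 / r) ^ 2) + p.1) p.2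
            + φ (A + r * Real.sqrt (1 - (p.2 / r) ^ 2) + p.1) p.2)
          + (φ (-A - r * Real.sqrt (1 - (p.2 / r) ^ 2) + p.1) p.2
            + φ (-A + r * Real.sqrt (1 - (p.2 / r) ^ 2) + p.1) p.2)) : ℝ) : ℂ)
        * Complex.exp (-Complex.I * p.1 * ξ))
      ((volume : Measure ℝ).prod ((volume : Measure ℝ).restrict (Set.Ioc 1 r))) := by
  have hr0 : (0:ℝ) < r := by linarith
  have hC0 : (0:ℝ) ≤ C := (abs_nonneg _).trans (hC 0 0)
  have hsq : Continuous fun p : ℝ × ℝ => Real.sqrt (1 - (p.2 / r) ^ 2) := by fun_prop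
  have hS : Continuous fun p : ℝ × ℝ =>
      ((φ (A - r * Real.sqrt (1 - (p.2 / r) ^ 2) + p.1) p.2
        + φ (A + r * Real.sqrt (1 - (p.2 / r) ^ 2) + p.1) p.2)
      + (φ (-A - r * Real.sqrt (1 - (p.2 / r) ^ 2) + p.1) p.2
        + φ (-A + r * Real.sqrt (1 - (p.2 / r) ^ 2) + p.1) p.2)) := by
    apply Continuous.add <;> apply Continuous.add <;>
      exact hφ.comp (Continuous.prodMk (by fun_prop) continuous_snd)
  have hmeas : AEStronglyMeasurable (fun p : ℝ × ℝ =>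
      ((1 / Real.sqrt (1 - (p.2 / r) ^ 2) *
          ((φ (A - r * Real.sqrt (1 - (p.2 / r) ^ 2) + p.1) p.2
            + φ (A + r * Real.sqrt (1 - (p.2 / r) ^ 2) + p.1) p.2)
          + (φ (-A - r * Real.sqrt (1 - (p.2 / r) ^ 2) + p.1) p.2
            + φ (-A + r * Real.sqrt (1 - (p.2 / r) ^ 2) + p.1) p.2)) : ℝ) : ℂ)
        * Complex.exp (-Complex.I * p.1 * ξ))
      ((volume : Measure ℝ).prod ((volume : Measure ℝ).restrict (Set.Ioc 1 r))) := by
    apply Measurable.aestronglyMeasurable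
    apply Measurable.mul
    · exact Complex.measurable_ofReal.comp
        ((Measurable.div measurable_const hsq.measurable).mul hS.measurable)
    · exact (Complex.continuous_exp.comp
        ((continuous_const.mul (Complex.continuous_ofReal.comp continuous_fst)).mul
          continuous_const)).measurable
  set K := M + (|A| + r) with hK
  have hbound_int : Integrable (fun p : ℝ × ℝ =>
      Set.indicator (Set.Icc (-K) K) (fun _ => 4 * C) p.1 *
      Set.indicator (Set.Ioc (1:ℝ) r)
        (fun z => r / Real.sqrt (r + 1) * (r - z) ^ (-(1/2) : ℝ)) p.2)
      ((volume : Measure ℝ).prod ((volume : Measure ℝ).restrict (Set.Ioc 1 r))) := by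
    apply Integrable.mul_prod
    · rw [integrable_indicator_iff measurableSet_Icc]
      exact integrableOn_const (measure_Icc_lt_top).ne
    · apply Integrable.indicator _ measurableSet_Ioc
      have h1 : IntervalIntegrable (fun x : ℝ => x ^ (-(1/2) : ℝ)) volume 0 (r - 1) :=
        intervalIntegral.intervalIntegrable_rpow' (by norm_num)
      have h2 := (h1.comp_sub_left r).symm
      have h3 : IntegrableOn (fun z : ℝ => (r - z) ^ (-(1/2) : ℝ)) (Set.Ioc 1 r) volume := by
        have h2' : IntervalIntegrable (fun z : ℝ => (r - z) ^ (-(1/2) : ℝ)) volume 1 r := by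
          simpa [sub_sub_cancel] using h2
        exact (intervalIntegrable_iff_integrableOn_Ioc_of_le hr.le).mp h2'
      exact h3.const_mul _
  apply Integrable.mono' hbound_int hmeas
  apply ae_of_all
  rintro ⟨x₀, z⟩
  simp only []
  rw [norm_mul, Complex.norm_real, norm_exp_unit, mul_one, Real.norm_eq_abs]
  by_cases hz : z ∈ Set.Ioc (1:ℝ) r
  · rw [Set.indicator_of_mem hz]
    have hg0 : (0:ℝ) ≤ 1 / Real.sqrt (1 - (z / r) ^ 2) := by positivity
    by_cases hx : x₀ ∈ Set.Icc (-K) K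
    · rw [Set.indicator_of_mem hx]
      have habs : |((φ (A - r * Real.sqrt (1 - (z / r) ^ 2) + x₀) z
            + φ (A + r * Real.sqrt (1 - (z / r) ^ 2) + x₀) z)
          + (φ (-A - r * Real.sqrt (1 - (z / r) ^ 2) + x₀) z
            + φ (-A + r * Real.sqrt (1 - (z / r) ^ 2) + x₀) z))| ≤ 4 * C := by
        have b1 := hC (A - r * Real.sqrt (1 - (z / r) ^ 2) + x₀) z
        have b2 := hC (A + r * Real.sqrt (1 - (z / r) ^ 2) + x₀) z
        have b3 := hC (-A - r * Real.sqrt (1 - (z / r) ^ 2) + x₀) z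
        have b4 := hC (-A + r * Real.sqrt (1 - (z / r) ^ 2) + x₀) z
        calc |_| ≤ _ := abs_add_le _ _
          _ ≤ 4 * C := by
            have := abs_add_le (φ (A - r * Real.sqrt (1 - (z / r) ^ 2) + x₀) z)
              (φ (A + r * Real.sqrt (1 - (z / r) ^ 2) + x₀) z)
            have := abs_add_le (φ (-A - r * Real.sqrt (1 - (z / r) ^ 2) + x₀) z)
              (φ (-A + r * Real.sqrt (1 - (z / r) ^ 2) + x₀) z)
            linarith
      rw [abs_mul, abs_of_nonneg hg0]
      have hgb := sqrt_inv_bound hr hz.1 hz.2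
      have hψ0 : (0:ℝ) ≤ r / Real.sqrt (r + 1) * (r - z) ^ (-(1/2) : ℝ) :=
        mul_nonneg (by positivity) (Real.rpow_nonneg (by linarith [hz.2]) _)
      nlinarith [mul_le_mul_of_nonneg_left habs hg0,
        mul_le_mul_of_nonneg_right hgb (show (0:ℝ) ≤ 4 * C by linarith)]
    · rw [Set.indicator_of_notMem hx]
      have hxK : K < |x₀| := by
        by_contra h
        push_neg at h
        exact hx (Set.mem_Icc.mpr (abs_le.mp h))
      have hb : 0 ≤ r * Real.sqrt (1 - (z / r) ^ 2) ∧ r * Real.sqrt (1 - (z / r) ^ 2) ≤ r := by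
        constructor
        · positivity
        · nlinarith [Real.sqrt_le_one.mpr (show 1 - (z / r) ^ 2 ≤ 1 by nlinarith [sq_nonneg (z / r)]),
            Real.sqrt_nonneg (1 - (z / r) ^ 2)]
      have hzero : ∀ a : ℝ, |a| ≤ |A| + r → φ (a + x₀) z = 0 := by
        intro a ha
        by_contra h
        have h1 := (hM _ _ h).1
        have h2 : |x₀| ≤ |a + x₀| + |a| := by
          have := abs_add_le (a + x₀) (-a)
          simpa using this
        rw [hK] at hxK
        linarith
      have hbabs : |r * Real.sqrt (1 - (z / r) ^ 2)| ≤ r := by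
        rw [abs_of_nonneg hb.1]; exact hb.2
      have e1 : |A - r * Real.sqrt (1 - (z / r) ^ 2)| ≤ |A| + r :=
        (abs_sub _ _).trans (by linarith)
      have e2 : |A + r * Real.sqrt (1 - (z / r) ^ 2)| ≤ |A| + r :=
        (abs_add_le _ _).trans (by linarith)
      have e3 : |-A - r * Real.sqrt (1 - (z / r) ^ 2)| ≤ |A| + r := by
        rw [show -A - r * Real.sqrt (1 - (z / r) ^ 2) = -(A + r * Real.sqrt (1 - (z / r) ^ 2))
          by ring, abs_neg]
        exact e2
      have e4 : |-A + r * Real.sqrt (1 - (z / r) ^ 2)| ≤ |A| + r := by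
        rw [show -A + r * Real.sqrt (1 - (z / r) ^ 2) = -(A - r * Real.sqrt (1 - (z / r) ^ 2))
          by ring, abs_neg]
        exact e1
      rw [hzero _ e1, hzero _ e2, hzero _ e3, hzero _ e4]
      simp
  · rw [Set.indicator_of_notMem hz, mul_zero]
    have : ((φ (A - r * Real.sqrt (1 - (z / r) ^ 2) + x₀) z
            + φ (A + r * Real.sqrt (1 - (z / r) ^ 2) + x₀) z)
          + (φ (-A - r * Real.sqrt (1 - (z / r) ^ 2) + x₀) z
            + φ (-A + r * Real.sqrt (1 - (z / r) ^ 2) + x₀) z)) = 0 ∨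
        Real.sqrt (1 - (z / r) ^ 2) = 0 := by
      by_cases h1 : z ≤ 1
      · left
        have hz1 : ∀ x : ℝ, φ x z = 0 := by
          intro x
          by_contra hc
          exact absurd (hM _ _ hc).2 (not_lt.mpr h1)
        rw [hz1, hz1, hz1, hz1]; ring
      · right
        have h2 : r < z := by
          by_contra h3
          exact hz (Set.mem_Ioc.mpr ⟨not_le.mp h1, not_lt.mp h3⟩)
        rw [Real.sqrt_eq_zero']
        have hd : 1 < z / r := (one_lt_div hr0).mpr h2
        nlinarith
    rcases this with h | h
    · rw [h, mul_zero, abs_zero]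
    · rw [h, div_zero, zero_mul, abs_zero]

lemma main_aux (φ : ℝ → ℝ → ℝ) (hφ : Continuous fun p : ℝ × ℝ => φ p.1 p.2)
    (M C : ℝ) (hM : ∀ x z : ℝ, φ x z ≠ 0 → |x| ≤ M ∧ 1 < z)
    (hC : ∀ x z : ℝ, |φ x z| ≤ C)
    (ξ r A : ℝ) (hr : 1 < r) :
    (∫ x₀ : ℝ, ((∫ z in (1:ℝ)..r,
        (1 / Real.sqrt (1 - (z / r) ^ 2)) *
          ((φ (A - r * Real.sqrt (1 - (z / r) ^ 2) + x₀) z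
            + φ (A + r * Real.sqrt (1 - (z / r) ^ 2) + x₀) z)
          + (φ (-A - r * Real.sqrt (1 - (z / r) ^ 2) + x₀) z
            + φ (-A + r * Real.sqrt (1 - (z / r) ^ 2) + x₀) z)) : ℝ) : ℂ)
        * Complex.exp (-Complex.I * x₀ * ξ))
      = ∫ z in Set.Ioc (1:ℝ) r,
          ((1 / Real.sqrt (1 - (z / r) ^ 2) : ℝ) : ℂ)
            * (∫ x : ℝ, (φ x z : ℂ) * Complex.exp (-Complex.I * x * ξ))
            * (4 * ((Real.cos (ξ * A) : ℝ) : ℂ)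
               * ((Real.cos (ξ * (r * Real.sqrt (1 - (z / r) ^ 2))) : ℝ) : ℂ)) := by
  have hIble := integrable_aux φ hφ M C hM hC ξ r A hr
  calc (∫ x₀ : ℝ, ((∫ z in (1:ℝ)..r,
        (1 / Real.sqrt (1 - (z / r) ^ 2)) *
          ((φ (A - r * Real.sqrt (1 - (z / r) ^ 2) + x₀) z
            + φ (A + r * Real.sqrt (1 - (z / r) ^ 2) + x₀) z)
          + (φ (-A - r * Real.sqrt (1 - (z / r) ^ 2) + x₀) z
            + φ (-A + r * Real.sqrt (1 - (z / r) ^ 2) + x₀) z)) : ℝ) : ℂ)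
        * Complex.exp (-Complex.I * x₀ * ξ))
      = ∫ x₀ : ℝ, ∫ z in Set.Ioc (1:ℝ) r,
          ((1 / Real.sqrt (1 - (z / r) ^ 2) *
          ((φ (A - r * Real.sqrt (1 - (z / r) ^ 2) + x₀) z
            + φ (A + r * Real.sqrt (1 - (z / r) ^ 2) + x₀) z)
          + (φ (-A - r * Real.sqrt (1 - (z / r) ^ 2) + x₀) z
            + φ (-A + r * Real.sqrt (1 - (z / r) ^ 2) + x₀) z)) : ℝ) : ℂ)
          * Complex.exp (-Complex.I * x₀ * ξ) := by
        congr 1; funext x₀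
        rw [← intervalIntegral.integral_ofReal, ← intervalIntegral.integral_mul_const,
          intervalIntegral.integral_of_le hr.le]
    _ = ∫ z in Set.Ioc (1:ℝ) r, ∫ x₀ : ℝ,
          ((1 / Real.sqrt (1 - (z / r) ^ 2) *
          ((φ (A - r * Real.sqrt (1 - (z / r) ^ 2) + x₀) z
            + φ (A + r * Real.sqrt (1 - (z / r) ^ 2) + x₀) z)
          + (φ (-A - r * Real.sqrt (1 - (z / r) ^ 2) + x₀) z
            + φ (-A + r * Real.sqrt (1 - (z / r) ^ 2) + x₀) z)) : ℝ) : ℂ)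
          * Complex.exp (-Complex.I * x₀ * ξ) := integral_integral_swap hIble
    _ = _ := by
        congr 1; funext z
        exact inner_key φ hφ M hM ξ r A z

theorem fourier_transform_of_radon_double_arcs
    (f : ℝ × ℝ → ℝ) (hf : Continuous f) (hfc : HasCompactSupport f)
    (hsupp : ∀ p : ℝ × ℝ, 1 ≤ p.2 → f p = 0)
    (f1 : ℝ → ℝ → ℝ) (hf1 : ∀ x z, f1 x z = f (x, 2 - z))
    (RD : ℝ → ℝ → ℝ)
    (hRD : ∀ x₀ r, 1 < r →
      RD x₀ r = ∫ z in (1 : ℝ)..r,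
        (1 / Real.sqrt (1 - (z / r) ^ 2)) *
          ((f1 (Real.sqrt (r ^ 2 - 1) - r * Real.sqrt (1 - (z / r) ^ 2) + x₀) z
            + f1 (Real.sqrt (r ^ 2 - 1) + r * Real.sqrt (1 - (z / r) ^ 2) + x₀) z)
          + (f1 (-Real.sqrt (r ^ 2 - 1) - r * Real.sqrt (1 - (z / r) ^ 2) + x₀) z
            + f1 (-Real.sqrt (r ^ 2 - 1) + r * Real.sqrt (1 - (z / r) ^ 2) + x₀) z))) :
    ∀ (ξ r : ℝ), 1 < r →
      (∫ x₀ : ℝ, (RD x₀ r : ℂ) * Complex.exp (-Complex.I * x₀ * ξ))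
        = 4 * ∫ s in (1 / r : ℝ)..1,
            ((r / Real.sqrt (1 - s ^ 2) : ℝ) : ℂ)
              * (∫ x : ℝ, (f1 x (r * s) : ℂ) * Complex.exp (-Complex.I * x * ξ))
              * (Real.cos (ξ * Real.sqrt (r ^ 2 - 1)) : ℝ)
              * (Real.cos (ξ * r * Real.sqrt (1 - s ^ 2)) : ℝ) := by
  intro ξ r hr
  have hr0 : (0:ℝ) < r := by linarith
  -- support radius
  obtain ⟨M, hMb⟩ := (Metric.isBounded_iff_subset_closedBall 0).mp hfc.isBounded
  have hMf : ∀ p : ℝ × ℝ, f p ≠ 0 → ‖p‖ ≤ M := by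
    intro p hp
    have := hMb (subset_tsupport f hp)
    simpa [Metric.mem_closedBall, dist_zero_right] using this
  -- bound constant
  obtain ⟨C₀, hC₀⟩ := hfc.isCompact.exists_bound_of_continuousOn hf.continuousOn
  have hCf1 : ∀ x z : ℝ, |f1 x z| ≤ max C₀ 0 := by
    intro x z
    rw [hf1]
    by_cases hp : (x, 2 - z) ∈ tsupport f
    · exact le_trans (by simpa [Real.norm_eq_abs] using hC₀ _ hp) (le_max_left _ _)
    · rw [image_eq_zero_of_notMem_tsupport hp]
      simp
  have hMf1 : ∀ x z : ℝ, f1 x z ≠ 0 → |x| ≤ M ∧ 1 < z := by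
    intro x z hxz
    rw [hf1] at hxz
    constructor
    · have h1 := hMf _ hxz
      have h2 : ‖(x, 2 - z).1‖ ≤ ‖(x, 2 - z)‖ := norm_fst_le _
      rw [Real.norm_eq_abs] at h2
      exact le_trans h2 h1
    · by_contra h
      exact hxz (hsupp (x, 2 - z) (by simp; linarith))
  have hφ : Continuous fun p : ℝ × ℝ => f1 p.1 p.2 := by
    simp only [hf1]
    exact hf.comp (continuous_fst.prodMk (continuous_const.sub continuous_snd))
  have hL : (∫ x₀ : ℝ, (RD x₀ r : ℂ) * Complex.exp (-Complex.I * x₀ * ξ))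
      = ∫ x₀ : ℝ, ((∫ z in (1 : ℝ)..r,
        (1 / Real.sqrt (1 - (z / r) ^ 2)) *
          ((f1 (Real.sqrt (r ^ 2 - 1) - r * Real.sqrt (1 - (z / r) ^ 2) + x₀) z
            + f1 (Real.sqrt (r ^ 2 - 1) + r * Real.sqrt (1 - (z / r) ^ 2) + x₀) z)
          + (f1 (-Real.sqrt (r ^ 2 - 1) - r * Real.sqrt (1 - (z / r) ^ 2) + x₀) z
            + f1 (-Real.sqrt (r ^ 2 - 1) + r * Real.sqrt (1 - (z / r) ^ 2) + x₀) z)) : ℝ) : ℂ)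
        * Complex.exp (-Complex.I * x₀ * ξ) := by
    congr 1; funext x₀; rw [hRD x₀ r hr]
  rw [hL, main_aux f1 hφ M (max C₀ 0) hMf1 hCf1 ξ r (Real.sqrt (r ^ 2 - 1)) hr]
  -- now handle the substitution z = r s on the RHS
  have hstep2 : (∫ z in Set.Ioc (1:ℝ) r,
      ((1 / Real.sqrt (1 - (z / r) ^ 2) : ℝ) : ℂ)
        * (∫ x : ℝ, (f1 x z : ℂ) * Complex.exp (-Complex.I * x * ξ))
        * (4 * ((Real.cos (ξ * Real.sqrt (r ^ 2 - 1)) : ℝ) : ℂ)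
           * ((Real.cos (ξ * (r * Real.sqrt (1 - (z / r) ^ 2))) : ℝ) : ℂ)))
      = (4 * ((Real.cos (ξ * Real.sqrt (r ^ 2 - 1)) : ℝ) : ℂ)) * ∫ z in Set.Ioc (1:ℝ) r,
      ((1 / Real.sqrt (1 - (z / r) ^ 2) : ℝ) : ℂ)
        * (∫ x : ℝ, (f1 x z : ℂ) * Complex.exp (-Complex.I * x * ξ))
        * ((Real.cos (ξ * r * Real.sqrt (1 - (z / r) ^ 2)) : ℝ) : ℂ) := by
    rw [← integral_const_mul]
    congr 1; funext z
    rw [mul_assoc ξ r]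
    ring
  rw [hstep2]
  have hsub : (∫ s in (1 / r : ℝ)..1,
      ((r / Real.sqrt (1 - s ^ 2) : ℝ) : ℂ)
        * (∫ x : ℝ, (f1 x (r * s) : ℂ) * Complex.exp (-Complex.I * x * ξ))
        * (Real.cos (ξ * Real.sqrt (r ^ 2 - 1)) : ℝ)
        * (Real.cos (ξ * r * Real.sqrt (1 - s ^ 2)) : ℝ))
      = ∫ s in (1 / r : ℝ)..1, ((r : ℂ) * ((Real.cos (ξ * Real.sqrt (r ^ 2 - 1)) : ℝ) : ℂ)) *
         (fun z : ℝ => ((1 / Real.sqrt (1 - (z / r) ^ 2) : ℝ) : ℂ)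
          * (∫ x : ℝ, (f1 x z : ℂ) * Complex.exp (-Complex.I * x * ξ))
          * ((Real.cos (ξ * r * Real.sqrt (1 - (z / r) ^ 2)) : ℝ) : ℂ)) (r * s) := by
    congr 1; funext s
    beta_reduce
    rw [mul_div_cancel_left₀ s hr0.ne']
    push_cast
    ring
  rw [hsub, intervalIntegral.integral_const_mul,
    intervalIntegral.integral_comp_mul_left
      (fun z : ℝ => ((1 / Real.sqrt (1 - (z / r) ^ 2) : ℝ) : ℂ)
        * (∫ x : ℝ, (f1 x z : ℂ) * Complex.exp (-Complex.I * x * ξ))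
        * ((Real.cos (ξ * r * Real.sqrt (1 - (z / r) ^ 2)) : ℝ) : ℂ)) hr0.ne',
    mul_one_div_cancel hr0.ne', mul_one,
    intervalIntegral.integral_of_le hr.le]
  rw [Complex.real_smul, Complex.ofReal_inv]
  have hrc : (r : ℂ) ≠ 0 := by exact_mod_cast hr0.ne'
  rw [mul_comm (r:ℂ), mul_assoc _ (r:ℂ), mul_inv_cancel_left₀ hrc]
  ring
end

section
/- Let h : ℝ → ℝ be continuous, compactly supported in (1, ∞), and define for η > ξ > 0: Φ(η) = ∫₁^∞ h(z) cos(z√(η²−ξ²))/√(η²−ξ²) dz. If Φ(η) = 0 for all η > ξ, then h = 0. -/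
open MeasureTheory Real Complex FourierTransform

theorem cosine_transform_injectivity
    (h : ℝ → ℝ) (hc : Continuous h) (hcs : HasCompactSupport h)
    (hvan : ∀ z : ℝ, z ≤ 1 → h z = 0)
    (ξ : ℝ) (hξ : 0 < ξ)
    (hΦ : ∀ η : ℝ, ξ < η →
      (∫ z in Set.Ioi (1 : ℝ),
        h z * Real.cos (z * Real.sqrt (η ^ 2 - ξ ^ 2)) / Real.sqrt (η ^ 2 - ξ ^ 2)) = 0) :
    ∀ z : ℝ, h z = 0 := by
  -- integrability of h z * cos (z * σ)
  have hint : ∀ σ : ℝ, Integrable (fun z => h z * Real.cos (z * σ)) := by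
    intro σ
    apply Continuous.integrable_of_hasCompactSupport
    · exact hc.mul (Real.continuous_cos.comp (continuous_id.mul continuous_const))
    · exact hcs.mul_right
  -- Step 1: the cosine transform vanishes for σ > 0
  have key : ∀ σ : ℝ, 0 < σ → (∫ z : ℝ, h z * Real.cos (z * σ)) = 0 := by
    intro σ hσ
    set η := Real.sqrt (ξ ^ 2 + σ ^ 2) with hηdef
    have hη : ξ < η := by
      rw [hηdef]
      rw [show ξ = Real.sqrt (ξ ^ 2) from (Real.sqrt_sq hξ.le).symm]
      apply Real.sqrt_lt_sqrt (by positivity)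
      · rw [Real.sq_sqrt (by positivity)]; nlinarith
    have hsq : η ^ 2 - ξ ^ 2 = σ ^ 2 := by
      rw [hηdef, Real.sq_sqrt (by positivity)]; ring
    have hs : Real.sqrt (η ^ 2 - ξ ^ 2) = σ := by
      rw [hsq, Real.sqrt_sq hσ.le]
    have h0 := hΦ η hη
    rw [hs] at h0
    rw [MeasureTheory.integral_div] at h0
    have h1 : (∫ z in Set.Ioi (1 : ℝ), h z * Real.cos (z * σ)) = 0 := by
      rcases div_eq_zero_iff.1 h0 with h2 | h2
      · exact h2
      · exact absurd h2 hσ.ne'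
    rw [← MeasureTheory.setIntegral_eq_integral_of_forall_compl_eq_zero
      (s := Set.Ioi (1 : ℝ)) (fun x hx => by
        rw [hvan x (by simpa using hx)]; ring)]
    exact h1
  -- evenness in σ
  have keyne : ∀ σ : ℝ, σ ≠ 0 → (∫ z : ℝ, h z * Real.cos (z * σ)) = 0 := by
    intro σ hσ
    rcases hσ.lt_or_gt with hneg | hpos
    · have := key (-σ) (by linarith)
      simpa [Real.cos_neg, mul_neg] using this
    · exact key σ hpos
  -- Step 2: the even extension, as a complex-valued function
  set g : ℝ → ℂ := fun z => ((h z + h (-z) : ℝ) : ℂ) with hgdef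
  have hgc : Continuous g := by
    exact Complex.continuous_ofReal.comp (hc.add (hc.comp continuous_neg))
  have hgcs : HasCompactSupport g := by
    have : HasCompactSupport (fun z => h z + h (-z)) := by
      exact hcs.add (hcs.comp_homeomorph (Homeomorph.neg ℝ))
    exact this.comp_left (g := Complex.ofReal) Complex.ofReal_zero
  have hgi : Integrable g := hgc.integrable_of_hasCompactSupport hgcs
  -- Fourier transform of g
  have hFg : ∀ w : ℝ, 𝓕 g w = ((2 * ∫ z : ℝ, h z * Real.cos (z * (2 * π * w)) : ℝ) : ℂ) := by
    intro w
    have : 𝓕 g w = ∫ v : ℝ, Complex.exp ((↑(-2 * π * (v * w)) * Complex.I)) • g v := by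
      rw [Real.fourier_eq']
      simp [RCLike.inner_apply, mul_comm (w:ℂ)]
    rw [this]
    have hexp : ∀ v : ℝ, Complex.exp ((↑(-2 * π * (v * w)) * Complex.I)) • g v =
        ((Real.cos (v * (2 * π * w)) * (h v + h (-v)) : ℝ) : ℂ) +
        ((-(Real.sin (v * (2 * π * w))) * (h v + h (-v)) : ℝ) : ℂ) * Complex.I := by
      intro v
      rw [Complex.exp_mul_I, hgdef]
      simp only [smul_eq_mul]
      push_cast
      rw [show (-2 * (π:ℂ) * ((v:ℂ) * (w:ℂ))) = -((v:ℂ) * (2 * π * w)) by ring,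
        Complex.cos_neg, Complex.sin_neg]
      ring
    rw [MeasureTheory.integral_congr_ae (Filter.Eventually.of_forall hexp)]
    have hintc : Integrable (fun v : ℝ =>
        ((Real.cos (v * (2 * π * w)) * (h v + h (-v)) : ℝ) : ℂ)) := by
      apply Continuous.integrable_of_hasCompactSupport
      · exact Complex.continuous_ofReal.comp
          ((Real.continuous_cos.comp (continuous_id.mul continuous_const)).mul
            (hc.add (hc.comp continuous_neg)))
      · apply HasCompactSupport.comp_left (g := Complex.ofReal) _ Complex.ofReal_zero
        exact ((hcs.add (hcs.comp_homeomorph (Homeomorph.neg ℝ))).mul_left)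
    have hints : Integrable (fun v : ℝ =>
        ((-(Real.sin (v * (2 * π * w))) * (h v + h (-v)) : ℝ) : ℂ)) := by
      apply Continuous.integrable_of_hasCompactSupport
      · exact Complex.continuous_ofReal.comp
          (((Real.continuous_sin.comp (continuous_id.mul continuous_const)).neg).mul
            (hc.add (hc.comp continuous_neg)))
      · apply HasCompactSupport.comp_left (g := Complex.ofReal) _ Complex.ofReal_zero
        exact ((hcs.add (hcs.comp_homeomorph (Homeomorph.neg ℝ))).mul_left)
    rw [MeasureTheory.integral_add hintc (hints.mul_const Complex.I)]
    rw [MeasureTheory.integral_mul_const]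
    rw [show (∫ a : ℝ, ((Real.cos (a * (2 * π * w)) * (h a + h (-a)) : ℝ) : ℂ)) = ((∫ a : ℝ, Real.cos (a * (2 * π * w)) * (h a + h (-a)) : ℝ) : ℂ) from integral_ofReal,
      show (∫ a : ℝ, ((-Real.sin (a * (2 * π * w)) * (h a + h (-a)) : ℝ) : ℂ)) = ((∫ a : ℝ, -Real.sin (a * (2 * π * w)) * (h a + h (-a)) : ℝ) : ℂ) from integral_ofReal]
    -- the sine part vanishes by oddness
    have hsin : (∫ v : ℝ, -(Real.sin (v * (2 * π * w))) * (h v + h (-v))) = 0 := by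
      have hodd := MeasureTheory.integral_neg_eq_self
        (fun v : ℝ => -(Real.sin (v * (2 * π * w))) * (h v + h (-v))) volume
      have heq : (fun v : ℝ => -(Real.sin ((-v) * (2 * π * w))) * (h (-v) + h (-(-v))))
          = fun v : ℝ => -(-(Real.sin (v * (2 * π * w))) * (h v + h (-v))) := by
        funext v; rw [show (-v) * (2 * π * w) = -(v * (2 * π * w)) by ring, Real.sin_neg]
        rw [neg_neg]; ring
      rw [heq, MeasureTheory.integral_neg] at hodd
      linarith
    rw [hsin]
    -- the cosine part
    have hcos : (∫ v : ℝ, Real.cos (v * (2 * π * w)) * (h v + h (-v)))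
        = 2 * ∫ z : ℝ, h z * Real.cos (z * (2 * π * w)) := by
      have hi1 : Integrable (fun v : ℝ => Real.cos (v * (2 * π * w)) * h v) := by
        simpa [mul_comm] using hint (2 * π * w)
      have hi2 : Integrable (fun v : ℝ => Real.cos (v * (2 * π * w)) * h (-v)) := by
        apply Continuous.integrable_of_hasCompactSupport
        · exact (Real.continuous_cos.comp (continuous_id.mul continuous_const)).mul
            (hc.comp continuous_neg)
        · exact (hcs.comp_homeomorph (Homeomorph.neg ℝ)).mul_left
      have hsplit : (∫ v : ℝ, Real.cos (v * (2 * π * w)) * (h v + h (-v)))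
          = (∫ v : ℝ, Real.cos (v * (2 * π * w)) * h v)
          + ∫ v : ℝ, Real.cos (v * (2 * π * w)) * h (-v) := by
        rw [← MeasureTheory.integral_add hi1 hi2]
        congr 1; funext v; ring
      have hflip : (∫ v : ℝ, Real.cos (v * (2 * π * w)) * h (-v))
          = ∫ v : ℝ, Real.cos (v * (2 * π * w)) * h v := by
        have := MeasureTheory.integral_neg_eq_self
          (fun v : ℝ => Real.cos (v * (2 * π * w)) * h (-v)) volume
        simpa [show ∀ v : ℝ, (-v) * (2 * π * w) = -(v * (2 * π * w)) from fun v => by ring,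
          Real.cos_neg] using this.symm
      rw [hsplit, hflip]
      simp_rw [mul_comm]
      ring
    rw [hcos]
    push_cast
    ring
  -- Fourier transform of g vanishes everywhere
  have hFg0 : 𝓕 g = 0 := by
    have hne : ∀ w : ℝ, w ≠ 0 → 𝓕 g w = 0 := by
      intro w hw
      rw [hFg w, keyne (2 * π * w) (by
        simp only [ne_eq, mul_eq_zero, not_or]
        exact ⟨⟨by norm_num, Real.pi_ne_zero⟩, hw⟩)]
      norm_num
    have hcont : Continuous (𝓕 g) :=
      VectorFourier.fourierIntegral_continuous Real.continuous_fourierChar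
        (by exact continuous_inner) hgi
    funext w
    rcases eq_or_ne w 0 with rfl | hw
    · -- by continuity
      have : Filter.Tendsto (𝓕 g) (nhdsWithin 0 {0}ᶜ) (nhds (𝓕 g 0)) :=
        (hcont.continuousAt).continuousWithinAt
      have h2 : Filter.Tendsto (𝓕 g) (nhdsWithin 0 {0}ᶜ) (nhds 0) := by
        apply Filter.Tendsto.congr' _ tendsto_const_nhds
        filter_upwards [self_mem_nhdsWithin] with x hx
        exact (hne x hx).symm
      exact tendsto_nhds_unique this h2
    · exact hne w hw
  -- Fourier inversion gives g = 0
  have hg0 : ∀ z : ℝ, g z = 0 := by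
    intro z
    have := hgi.fourierInv_fourier_eq (by rw [hFg0]; exact integrable_zero _ _ _)
      (hgc.continuousAt (x := z))
    rw [hFg0] at this
    have h0 : 𝓕⁻ (0 : ℝ → ℂ) z = 0 := by
      simp [Real.fourierInv_eq]
    rw [h0] at this
    exact this.symm
  -- conclude
  intro z
  rcases le_or_gt z 1 with hz | hz
  · exact hvan z hz
  · have := hg0 z
    rw [hgdef] at this
    simp only [Complex.ofReal_eq_zero] at this
    have h2 : h (-z) = 0 := hvan (-z) (by linarith)
    linarith [this, h2]
end
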